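/- Let n ≥ 2. The near-semiring 𝒩 has precisely three congruences: (1) the equality relation, (2) the universal relation 𝒩 × 𝒩, and (3) the relation (A^+(B_n) × A^+(B_n)) ∪ {(0,0)}. That is, each of these three relations is a congruence of the near-semiring 𝒩, they are pairwise distinct, and every congruence of the near-semiring 𝒩 equals one of them. -/

import Mathlib

/-!
Common setup: the Brandt semigroup `B n`, self-maps with pointwise addition and
composition product, affine maps, the affine near-semiring `A⁺(Bₙ)`, and the
zero-symmetric near-semiring `𝒩 = A⁺(Bₙ) ∪ {0}`.
-/

/-- The Brandt semigroup `Bₙ`: pairs `(i,j)` with `i,j ∈ [n]`, together with the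
zero element `ϑ` (represented by `none`). -/
abbrev B (n : ℕ) : Type := Option (Fin n × Fin n)

/-- Addition in the Brandt semigroup: `(i,j)+(k,l) = (i,l)` if `j = k`, and `ϑ` otherwise;
`ϑ` is absorbing. -/
def badd {n : ℕ} : B n → B n → B n
  | some (i, j), some (k, l) => if j = k then some (i, l) else none
  | _, _ => none

/-- Pointwise addition of self-maps of `B n`:  `x(f+g) = xf + xg`. -/
def madd {n : ℕ} (f g : B n → B n) : B n → B n := fun x => badd (f x) (g x)

/-- The product of self-maps of `B n`: `x(fg) = (xf)g`. -/
def mcomp {n : ℕ} (f g : B n → B n) : B n → B n := fun x => g (f x)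

/-- An additive endomorphism of the Brandt semigroup. -/
def IsEndo {n : ℕ} (e : B n → B n) : Prop := ∀ a b, e (badd a b) = badd (e a) (e b)

/-- An affine map: the pointwise sum of an additive endomorphism and a constant map. -/
def IsAffine {n : ℕ} (f : B n → B n) : Prop :=
  ∃ e c, IsEndo e ∧ ∀ x, f x = badd (e x) c

/-- `A⁺(Bₙ)`: the subsemigroup of `(M(Bₙ), +)` generated by the affine maps. -/
inductive Aplus (n : ℕ) : (B n → B n) → Prop
  | affine {f : B n → B n} : IsAffine f → Aplus n f
  | add {f g : B n → B n} : Aplus n f → Aplus n g → Aplus n (madd f g)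

lemma isEndo_constBot {n : ℕ} : IsEndo (fun _ : B n => (none : B n)) := by
  intro a b; rfl

lemma isEndo_constIdem {n : ℕ} (p : Fin n) :
    IsEndo (fun _ : B n => (some (p, p) : B n)) := by
  intro a b; simp [badd]

/-- Every constant map is affine. -/
lemma isAffine_const {n : ℕ} (c : B n) : IsAffine (fun _ : B n => c) := by
  match c with
  | none => exact ⟨fun _ => none, none, isEndo_constBot, fun x => rfl⟩
  | some (p, q) =>
      exact ⟨fun _ => some (p, p), some (p, q), isEndo_constIdem p, fun x => by simp [badd]⟩

lemma aplus_const {n : ℕ} (c : B n) : Aplus n (fun _ : B n => c) :=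
  Aplus.affine (isAffine_const c)

lemma aplus_comp_endo {n : ℕ} {e : B n → B n} (he : IsEndo e)
    {f : B n → B n} (hf : Aplus n f) : Aplus n (fun x => e (f x)) := by
  induction hf with
  | affine h =>
      rename_i f0
      obtain ⟨e', c, he', hfe⟩ := h
      refine Aplus.affine ⟨fun x => e (e' x), e c, fun a b => ?_, fun x => ?_⟩
      · show e (e' (badd a b)) = badd (e (e' a)) (e (e' b))
        rw [he', he]
      · show e (f0 x) = badd (e (e' x)) (e c)
        rw [hfe, he]
  | add h1 h2 ih1 ih2 =>
      rename_i g1 g2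
      have heq : (fun x => e (madd g1 g2 x))
          = madd (fun x => e (g1 x)) (fun x => e (g2 x)) := by
        funext x; exact he (g1 x) (g2 x)
      rw [heq]
      exact Aplus.add ih1 ih2

/-- `A⁺(Bₙ)` is closed under the product. -/
lemma aplus_comp {n : ℕ} {f g : B n → B n} (hf : Aplus n f) (hg : Aplus n g) :
    Aplus n (mcomp f g) := by
  induction hg with
  | affine h =>
      rename_i g0
      obtain ⟨e, c, he, hge⟩ := h
      have heq : mcomp f g0 = madd (fun x => e (f x)) (fun _ => c) := by
        funext x; exact hge (f x)
      rw [heq]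
      exact Aplus.add (aplus_comp_endo he hf) (aplus_const c)
  | add h1 h2 ih1 ih2 =>
      exact Aplus.add ih1 ih2

/-- `𝒩 = A⁺(Bₙ) ∪ {0}`: the zero-symmetric affine near-semiring, with a new
zero element `0` (represented by `none`) adjoined to `A⁺(Bₙ)`. -/
abbrev N (n : ℕ) : Type := Option {f : B n → B n // Aplus n f}

instance (n : ℕ) : Zero (N n) := ⟨none⟩

/-- Addition in `𝒩`: `0` is the additive identity; on `A⁺(Bₙ)` it is pointwise addition. -/
instance (n : ℕ) : Add (N n) :=
  ⟨fun a b =>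
    match a, b with
    | none, b => b
    | a, none => a
    | some f, some g => some ⟨madd f.1 g.1, Aplus.add f.2 g.2⟩⟩

/-- Multiplication in `𝒩`: `0` is absorbing; on `A⁺(Bₙ)` it is the product `fg`. -/
instance (n : ℕ) : Mul (N n) :=
  ⟨fun a b =>
    match a, b with
    | some f, some g => some ⟨mcomp f.1 g.1, aplus_comp f.2 g.2⟩
    | _, _ => none⟩

/-- The element of `𝒩` determined by a map in `A⁺(Bₙ)`. -/
def ofA {n : ℕ} {f : B n → B n} (hf : Aplus n f) : N n := some ⟨f, hf⟩

/-- The constant map `ξ_c`, as an element of `𝒩`. -/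
def xiN (n : ℕ) (c : B n) : N n := ofA (aplus_const c)

/-- `𝒞 = C_{Bₙ} ∪ {0}`: the constant maps together with `0`, as a subset of `𝒩`. -/
def Cset (n : ℕ) : Set (N n) := insert 0 (Set.range (xiN n))

/-- The relation `(A⁺(Bₙ) × A⁺(Bₙ)) ∪ {(0,0)}` on `𝒩`. -/
def theta (n : ℕ) (a b : N n) : Prop := (a ≠ 0 ∧ b ≠ 0) ∨ (a = 0 ∧ b = 0)

/-- A congruence of the semigroup `(𝒩, +)`. -/
structure IsAddCong (n : ℕ) (r : N n → N n → Prop) : Prop where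
  refl : ∀ a, r a a
  symm : ∀ {a b}, r a b → r b a
  trans : ∀ {a b c}, r a b → r b c → r a c
  add_right : ∀ {a b} (c), r a b → r (a + c) (b + c)
  add_left : ∀ {a b} (c), r a b → r (c + a) (c + b)

/-- The equivalence relations on `𝒩` whose class of `0` is a right ideal:
compatible with `+` on both sides and with `·` on the right. -/
structure IsRightCong (n : ℕ) (r : N n → N n → Prop) extends IsAddCong n r : Prop where
  mul_right : ∀ {a b} (c), r a b → r (a * c) (b * c)

/-- A congruence of the near-semiring `𝒩`. -/
structure IsNSCong (n : ℕ) (r : N n → N n → Prop) extends IsAddCong n r : Prop where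
  mul_right : ∀ {a b} (c), r a b → r (a * c) (b * c)
  mul_left : ∀ {a b} (c), r a b → r (c * a) (c * b)

/-- The singleton-support map `σ^{(k,l)}_{(p,q)}` sending `(k,l)` to `(p,q)` and
everything else to `ϑ`. -/
def sgl {n : ℕ} (k l p q : Fin n) : B n → B n :=
  fun x => if x = some (k, l) then some (p, q) else none

/-- The `n`-support map `(p,q;σ)` sending `(i,p)` to `(iσ,q)` and everything else to `ϑ`. -/
def nsupp {n : ℕ} (p q : Fin n) (σ : Equiv.Perm (Fin n)) : B n → B n
  | some (i, j) => if j = p then some (σ i, q) else none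
  | none => none

/-- The endomorphism `(i,j) ↦ (iσ, jσ)` of `Bₙ`. -/
def permEndo {n : ℕ} (σ : Equiv.Perm (Fin n)) : B n → B n
  | some (i, j) => some (σ i, σ j)
  | none => none

lemma isEndo_permEndo {n : ℕ} (σ : Equiv.Perm (Fin n)) : IsEndo (permEndo σ) := by
  rintro (_ | ⟨i, j⟩) (_ | ⟨k, l⟩) <;> simp [badd, permEndo]
  by_cases h : j = k
  · simp [h, permEndo]
  · simp [h, fun hc => h (σ.injective hc), permEndo, badd]

lemma aplus_nsupp {n : ℕ} (p q : Fin n) (σ : Equiv.Perm (Fin n)) :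
    Aplus n (nsupp p q σ) := by
  refine Aplus.affine ⟨permEndo σ, some (σ p, q), isEndo_permEndo σ, ?_⟩
  rintro (_ | ⟨i, j⟩)
  · rfl
  · show nsupp p q σ (some (i, j)) = badd (some (σ i, σ j)) (some (σ p, q))
    by_cases h : j = p
    · simp [nsupp, badd, h]
    · simp [nsupp, badd, h, fun hc => h (σ.injective hc)]

lemma sgl_eq_madd {n : ℕ} (k l p q : Fin n) :
    sgl k l p q = madd (fun _ : B n => (some (p, q) : B n)) (nsupp l q (Equiv.swap k q)) := by
  funext x
  rcases x with _ | ⟨i, j⟩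
  · rfl
  · by_cases hj : j = l
    · by_cases hi : i = k
      · subst hi; subst hj
        simp [sgl, madd, nsupp, badd, Equiv.swap_apply_left]
      · have hs : Equiv.swap k q i ≠ q := fun hc =>
          hi ((Equiv.swap k q).injective (hc.trans (Equiv.swap_apply_left k q).symm))
        simp [sgl, madd, nsupp, badd, hj, hi, Ne.symm hs]
    · simp [sgl, madd, nsupp, badd, hj]

lemma aplus_sgl {n : ℕ} (k l p q : Fin n) : Aplus n (sgl k l p q) := by
  rw [sgl_eq_madd]
  exact Aplus.add (aplus_const _) (aplus_nsupp _ _ _)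

/-- The singleton-support map `σ^{(k,l)}_{(p,q)}`, as an element of `𝒩`. -/
def sglN (n : ℕ) (k l p q : Fin n) : N n := ofA (aplus_sgl k l p q)

/-- The `n`-support map `(p,q;σ)`, as an element of `𝒩`. -/
def nsuppN (n : ℕ) (p q : Fin n) (σ : Equiv.Perm (Fin n)) : N n := ofA (aplus_nsupp p q σ)

section Aux

variable {n : ℕ}

lemma badd_none_right (a : B n) : badd a none = none := by
  rcases a with _ | ⟨i, j⟩ <;> rfl

lemma badd_none_left (a : B n) : badd none a = none := rfl

lemma N_add_zero (a : N n) : a + 0 = a := by cases a <;> rfl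

lemma N_zero_add (a : N n) : 0 + a = a := by cases a <;> rfl

lemma N_zero_mul (a : N n) : (0 : N n) * a = 0 := by cases a <;> rfl

lemma N_add_some (f g : {f : B n → B n // Aplus n f}) :
    (some f + some g : N n) = some ⟨madd f.1 g.1, Aplus.add f.2 g.2⟩ := rfl

lemma N_mul_some (f g : {f : B n → B n // Aplus n f}) :
    (some f * some g : N n) = some ⟨mcomp f.1 g.1, aplus_comp f.2 g.2⟩ := rfl

lemma xi_mul (c : B n) (g : {f : B n → B n // Aplus n f}) :
    xiN n c * some g = xiN n (g.1 c) := by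
  show (some _ * some _ : N n) = _
  rw [N_mul_some]
  unfold xiN ofA
  congr 1

lemma mul_xi (g : {f : B n → B n // Aplus n f}) (c : B n) :
    some g * xiN n c = xiN n c := by
  show (some _ * some _ : N n) = _
  rw [N_mul_some]
  unfold xiN ofA
  congr 1

lemma add_xinone (g : {f : B n → B n // Aplus n f}) :
    some g + xiN n none = xiN n none := by
  show (some _ + some _ : N n) = _
  rw [N_add_some]
  unfold xiN ofA
  congr 1
  apply Subtype.ext
  funext x
  exact badd_none_right (g.1 x)

lemma xinone_add (g : {f : B n → B n // Aplus n f}) :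
    xiN n none + some g = xiN n none := by
  show (some _ + some _ : N n) = _
  rw [N_add_some]
  unfold xiN ofA
  congr 1

lemma xi_mul_sgl (c : B n) (k l p q : Fin n) :
    xiN n c * sglN n k l p q = xiN n (sgl k l p q c) :=
  xi_mul c ⟨sgl k l p q, aplus_sgl k l p q⟩

/-- If a congruence relates two distinct constants, it relates every constant to `ξ_ϑ`. -/
lemma rel_const_none {r : N n → N n → Prop} (hr : IsNSCong n r)
    {c d : B n} (hcd : c ≠ d) (h : r (xiN n c) (xiN n d)) :
    ∀ e : B n, r (xiN n e) (xiN n none) := by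
  -- reduce to the case where the first constant is non-ϑ and the second maps to ϑ
  have key : ∀ (k l : Fin n) (d' : B n), d' ≠ some (k, l) →
      r (xiN n (some (k, l))) (xiN n d') →
      ∀ e : B n, r (xiN n e) (xiN n none) := by
    intro k l d' hd' h' e
    rcases e with _ | ⟨p, q⟩
    · exact hr.refl _
    · have h2 := hr.mul_right (sglN n k l p q) h'
      rw [xi_mul_sgl, xi_mul_sgl] at h2
      have e1 : sgl k l p q (some (k, l)) = some (p, q) := by simp [sgl]
      have e2 : sgl k l p q d' = none := by simp [sgl, hd']
      rwa [e1, e2] at h2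
  rcases c with _ | ⟨k, l⟩
  · rcases d with _ | ⟨k, l⟩
    · exact absurd rfl hcd
    · exact key k l none (by simp) (hr.symm h)
  · exact key k l d (Ne.symm hcd) h

lemma badd_idem_step (p q : Fin n) (a : B n) :
    badd (badd a (some (p, p))) (some (p, q)) = badd a (some (p, q)) := by
  rcases a with _ | ⟨i, j⟩
  · rfl
  · by_cases hj : j = p <;> simp [badd, hj]

/-- If a congruence relates every constant to `ξ_ϑ`, it relates every element of `A⁺` to `ξ_ϑ`. -/
lemma rel_all_none {r : N n → N n → Prop} (hr : IsNSCong n r)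
    (hconst : ∀ e : B n, r (xiN n e) (xiN n none)) :
    ∀ (f : B n → B n) (hf : Aplus n f), r (some ⟨f, hf⟩) (xiN n none) := by
  intro f hf
  induction hf with
  | affine h =>
      rename_i f0
      obtain ⟨e, c, he, hfe⟩ := h
      rcases c with _ | ⟨p, q⟩
      · have : (some ⟨f0, Aplus.affine ⟨e, none, he, hfe⟩⟩ : N n) = xiN n none := by
          unfold xiN ofA
          congr 1
          apply Subtype.ext
          funext x
          show f0 x = none
          rw [hfe x]
          exact badd_none_right (e x)
        rw [this]
        exact hr.refl _
      · set g' : B n → B n := fun x => badd (e x) (some (p, p)) with hg'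
        have hg'A : Aplus n g' := Aplus.affine ⟨e, some (p, p), he, fun _ => rfl⟩
        have h1 := hr.add_left (some ⟨g', hg'A⟩) (hconst (some (p, q)))
        have e1 : (some ⟨g', hg'A⟩ : N n) + xiN n (some (p, q))
            = some ⟨f0, Aplus.affine ⟨e, some (p, q), he, hfe⟩⟩ := by
          show (some _ + some _ : N n) = _
          rw [N_add_some]
          congr 1
          apply Subtype.ext
          funext x
          show badd (badd (e x) (some (p, p))) (some (p, q)) = f0 x
          rw [badd_idem_step, hfe x]
        rw [e1, add_xinone] at h1
        exact h1
  | add h1 h2 ih1 ih2 =>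
      rename_i f1 f2
      have h3 := hr.add_right (some ⟨f2, h2⟩) ih1
      rw [xinone_add] at h3
      exact h3

/-- If a congruence relates `0` to a nonzero element, it is universal. -/
lemma univ_of_zero {r : N n → N n → Prop} (hr : IsNSCong n r)
    {a : N n} (h0 : r 0 a) (ha : a ≠ 0) : ∀ u v : N n, r u v := by
  obtain ⟨g, rfl⟩ : ∃ g, a = some g := Option.ne_none_iff_exists'.mp ha
  have h1 : r 0 (xiN n none) := by
    have h2 := hr.mul_right (xiN n none) h0
    rwa [N_zero_mul, mul_xi] at h2
  have key : ∀ u : N n, r u (xiN n none) := by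
    intro u
    rcases u with _ | gu
    · exact h1
    · have h3 := hr.add_left (some gu) h1
      rwa [N_add_zero, add_xinone] at h3
  intro u v
  exact hr.trans (key u) (hr.symm (key v))

/-- If a congruence relates two distinct nonzero elements, it relates all nonzero pairs. -/
lemma rel_nonzero {r : N n → N n → Prop} (hr : IsNSCong n r)
    {a b : N n} (hab : r a b) (hne : a ≠ b) (ha : a ≠ 0) (hb : b ≠ 0) :
    ∀ u v : N n, u ≠ 0 → v ≠ 0 → r u v := by
  obtain ⟨f, rfl⟩ : ∃ f, a = some f := Option.ne_none_iff_exists'.mp ha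
  obtain ⟨g, rfl⟩ : ∃ g, b = some g := Option.ne_none_iff_exists'.mp hb
  have hfg : f.1 ≠ g.1 := by
    intro hh
    exact hne (congrArg some (Subtype.ext hh))
  obtain ⟨x, hx⟩ := Function.ne_iff.mp hfg
  have hc : r (xiN n (f.1 x)) (xiN n (g.1 x)) := by
    have h2 := hr.mul_left (xiN n x) hab
    rwa [xi_mul, xi_mul] at h2
  have hconst := rel_const_none hr hx hc
  have hall := rel_all_none hr hconst
  intro u v hu hv
  obtain ⟨gu, rfl⟩ : ∃ gu, u = some gu := Option.ne_none_iff_exists'.mp hu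
  obtain ⟨gv, rfl⟩ : ∃ gv, v = some gv := Option.ne_none_iff_exists'.mp hv
  exact hr.trans (hall gu.1 gu.2) (hr.symm (hall gv.1 gv.2))

lemma N_add_ne_zero_left {a : N n} (c : N n) (ha : a ≠ 0) : a + c ≠ 0 := by
  rcases a with _ | f
  · exact absurd rfl ha
  · rcases c with _ | g <;> exact fun h => Option.some_ne_none _ h

lemma N_add_ne_zero_right {a : N n} (c : N n) (ha : a ≠ 0) : c + a ≠ 0 := by
  rcases a with _ | f
  · exact absurd rfl ha
  · rcases c with _ | g <;> exact fun h => Option.some_ne_none _ h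

end Aux

/-- Let `n ≥ 2`. The near-semiring `𝒩` has precisely three congruences:
equality, the universal relation, and `(A⁺(Bₙ) × A⁺(Bₙ)) ∪ {(0,0)}`; these are pairwise
distinct and every congruence of `𝒩` is one of them. -/
theorem stmt6 (n : ℕ) (hn : 2 ≤ n) :
    IsNSCong n (fun a b : N n => a = b) ∧
    IsNSCong n (fun _ _ : N n => True) ∧
    IsNSCong n (theta n) ∧
    ((fun a b : N n => a = b) ≠ fun _ _ : N n => True) ∧
    ((fun a b : N n => a = b) ≠ theta n) ∧
    (theta n ≠ fun _ _ : N n => True) ∧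
    (∀ r : N n → N n → Prop, IsNSCong n r →
      (∀ a b : N n, r a b ↔ a = b) ∨ (∀ a b : N n, r a b) ∨
        (∀ a b : N n, r a b ↔ theta n a b)) := by
  classical
  have hpos : 0 < n := lt_of_lt_of_le (by norm_num) hn
  have xiN_ne_zero : ∀ c : B n, xiN n c ≠ (0 : N n) := fun c h => Option.some_ne_none _ h
  refine ⟨?_, ?_, ?_, ?_, ?_, ?_, ?_⟩
  · -- equality is a congruence
    exact { refl := fun a => rfl, symm := Eq.symm, trans := Eq.trans,
            add_right := fun c h => by rw [h], add_left := fun c h => by rw [h],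
            mul_right := fun c h => by rw [h], mul_left := fun c h => by rw [h] }
  · -- the universal relation is a congruence
    exact { refl := fun _ => trivial, symm := fun _ => trivial, trans := fun _ _ => trivial,
            add_right := fun _ _ => trivial, add_left := fun _ _ => trivial,
            mul_right := fun _ _ => trivial, mul_left := fun _ _ => trivial }
  · -- theta is a congruence
    have trefl : ∀ a : N n, theta n a a := by
      intro a
      by_cases h : a = 0
      · exact Or.inr ⟨h, h⟩
      · exact Or.inl ⟨h, h⟩
    refine { refl := trefl, symm := ?_, trans := ?_, add_right := ?_, add_left := ?_,
             mul_right := ?_, mul_left := ?_ }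
    · rintro a b (⟨h1, h2⟩ | ⟨h1, h2⟩)
      · exact Or.inl ⟨h2, h1⟩
      · exact Or.inr ⟨h2, h1⟩
    · rintro a b c (⟨h1, h2⟩ | ⟨h1, h2⟩) (⟨h3, h4⟩ | ⟨h3, h4⟩)
      · exact Or.inl ⟨h1, h4⟩
      · exact absurd h3 h2
      · exact absurd h2 (fun h => h3 h)
      · exact Or.inr ⟨h1, h4⟩
    · rintro a b c (⟨h1, h2⟩ | ⟨h1, h2⟩)
      · exact Or.inl ⟨N_add_ne_zero_left c h1, N_add_ne_zero_left c h2⟩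
      · subst h1; subst h2; exact trefl _
    · rintro a b c (⟨h1, h2⟩ | ⟨h1, h2⟩)
      · exact Or.inl ⟨N_add_ne_zero_right c h1, N_add_ne_zero_right c h2⟩
      · subst h1; subst h2; exact trefl _
    · rintro a b c (⟨h1, h2⟩ | ⟨h1, h2⟩)
      · rcases c with _ | gc
        · rcases a with _ | fa
          · exact absurd rfl h1
          · rcases b with _ | fb
            · exact absurd rfl h2
            · exact Or.inr ⟨rfl, rfl⟩
        · obtain ⟨fa, rfl⟩ : ∃ f, a = some f := Option.ne_none_iff_exists'.mp h1
          obtain ⟨fb, rfl⟩ : ∃ f, b = some f := Option.ne_none_iff_exists'.mp h2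
          exact Or.inl ⟨fun h => Option.some_ne_none _ h, fun h => Option.some_ne_none _ h⟩
      · subst h1; subst h2; exact trefl _
    · rintro a b c (⟨h1, h2⟩ | ⟨h1, h2⟩)
      · rcases c with _ | gc
        · exact Or.inr ⟨rfl, rfl⟩
        · obtain ⟨fa, rfl⟩ : ∃ f, a = some f := Option.ne_none_iff_exists'.mp h1
          obtain ⟨fb, rfl⟩ : ∃ f, b = some f := Option.ne_none_iff_exists'.mp h2
          exact Or.inl ⟨fun h => Option.some_ne_none _ h, fun h => Option.some_ne_none _ h⟩
      · subst h1; subst h2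
        exact trefl _
  · -- equality ≠ universal
    intro h
    have h2 : (0 : N n) = xiN n none := by
      have := congrFun (congrFun h (0 : N n)) (xiN n none)
      rw [this]; trivial
    exact xiN_ne_zero none h2.symm
  · -- equality ≠ theta
    intro h
    set c : B n := some (⟨0, hpos⟩, ⟨0, hpos⟩) with hc
    have ht : theta n (xiN n none) (xiN n c) := Or.inl ⟨xiN_ne_zero _, xiN_ne_zero _⟩
    have heq : xiN n none = xiN n c := by
      have := congrFun (congrFun h (xiN n none)) (xiN n c)
      rw [this]; exact ht
    have hval : (fun _ : B n => (none : B n)) = fun _ : B n => c := by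
      have := Option.some.inj heq
      exact congrArg Subtype.val this
    have := congrFun hval none
    rw [hc] at this
    exact Option.some_ne_none _ this.symm
  · -- theta ≠ universal
    intro h
    have ht : theta n (0 : N n) (xiN n none) := by rw [h]; trivial
    rcases ht with ⟨h1, _⟩ | ⟨_, h2⟩
    · exact h1 rfl
    · exact xiN_ne_zero none h2
  · -- classification
    intro r hr
    by_cases hsub : ∀ a b : N n, r a b → a = b
    · left
      intro a b
      exact ⟨hsub a b, fun h => h ▸ hr.refl a⟩
    · push_neg at hsub
      obtain ⟨a, b, hab, hne⟩ := hsub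
      by_cases hzero : ∃ u : N n, u ≠ 0 ∧ r 0 u
      · obtain ⟨u, hu, h0u⟩ := hzero
        right; left
        exact univ_of_zero hr h0u hu
      · push_neg at hzero
        right; right
        have ha : a ≠ 0 := by
          rintro rfl
          have hb : b ≠ 0 := fun h => hne h.symm
          exact hzero b hb hab
        have hb : b ≠ 0 := by
          rintro rfl
          exact hzero a ha (hr.symm hab)
        have hall := rel_nonzero hr hab hne ha hb
        intro u v
        constructor
        · intro huv
          by_cases hu : u = 0
          · subst hu
            by_cases hv : v = 0
            · exact Or.inr ⟨rfl, hv⟩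
            · exact absurd huv (hzero v hv)
          · by_cases hv : v = 0
            · subst hv
              exact absurd (hr.symm huv) (hzero u hu)
            · exact Or.inl ⟨hu, hv⟩
        · rintro (⟨hu, hv⟩ | ⟨hu, hv⟩)
          · exact hall u v hu hv
          · subst hu; subst hv; exact hr.refl 0
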